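/- Let ϑ be an invertible real antisymmetric d×d matrix (so d is even and det ϑ > 0). For all f₁, f₂ ∈ 𝒮(ℝ^d) and all x ∈ ℝ^d, (f₁ ⋆_ϑ f₂)(x) = (π^d det ϑ)^{−1} ∫_{ℝ^d} f₁(t) (𝓕̄_ϑ f₂)(x−t) e^{−2i x·(ϑ^{−1}t)} dt, where (𝓕̄_ϑ f)(ξ) := ∫_{ℝ^d} f(x) e^{−2i x·(ϑ^{−1}ξ)} dx is the conjugate symplectic Fourier transform. Equivalently, f₁ ⋆_ϑ f₂ = (π^d det ϑ)^{−1} f₁ ⊛_{ϑ'} (𝓕̄_ϑ f₂) with ϑ' := −4ϑ^{−1} (second identity of (5.2)). -/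

import Mathlib

/-!
STATEMENT 9 (second identity of (5.2)).
For an invertible real antisymmetric matrix `ϑ`,
`(f₁ ⋆_ϑ f₂)(x) = (π^d det ϑ)^{−1} ∫ f₁(t) (𝓕̄_ϑ f₂)(x−t) e^{−2i x·(ϑ⁻¹t)} dt`,
where `(𝓕̄_ϑ f)(ξ) = ∫ f(x) e^{−2i x·(ϑ⁻¹ξ)} dx` is the conjugate symplectic
Fourier transform; equivalently
`f₁ ⋆_ϑ f₂ = (π^d det ϑ)^{−1} f₁ ⊛_{−4ϑ⁻¹} (𝓕̄_ϑ f₂)`.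
-/

open MeasureTheory Matrix

/-- The Fourier transform `(𝓕f)(s) = ∫ f(x) e^{−i x·s} dx`. -/
noncomputable def fourierT (d : ℕ) (f : (Fin d → ℝ) → ℂ) (s : Fin d → ℝ) : ℂ :=
  ∫ x : Fin d → ℝ, f x * Complex.exp (-Complex.I * ((x ⬝ᵥ s : ℝ) : ℂ))

/-- The twisted convolution
`(g₁ ⊛_ϑ g₂)(s) = ∫ g₁(t) g₂(s−t) e^{(i/2) s·(ϑt)} dt`. -/
noncomputable def twConv (d : ℕ) (ϑ : Matrix (Fin d) (Fin d) ℝ)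
    (g₁ g₂ : (Fin d → ℝ) → ℂ) (s : Fin d → ℝ) : ℂ :=
  ∫ t : Fin d → ℝ, g₁ t * g₂ (s - t) *
    Complex.exp (Complex.I / 2 * ((s ⬝ᵥ ϑ.mulVec t : ℝ) : ℂ))

/-- The Moyal star product
`(f₁ ⋆_ϑ f₂)(x) = (2π)^{−d} ∫ (𝓕f₁)(t) f₂(x + (1/2)ϑt) e^{i t·x} dt`. -/
noncomputable def moyal (d : ℕ) (ϑ : Matrix (Fin d) (Fin d) ℝ)
    (f₁ f₂ : (Fin d → ℝ) → ℂ) (x : Fin d → ℝ) : ℂ :=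
  (((2 * Real.pi) ^ d : ℝ) : ℂ)⁻¹ *
    ∫ t : Fin d → ℝ, fourierT d f₁ t * f₂ (x + (1 / 2 : ℝ) • ϑ.mulVec t) *
      Complex.exp (Complex.I * ((t ⬝ᵥ x : ℝ) : ℂ))

/-- The conjugate symplectic Fourier transform
`(𝓕̄_ϑ f)(ξ) = ∫ f(x) e^{−2i x·(ϑ⁻¹ξ)} dx`. -/
noncomputable def symplFTBar (d : ℕ) (ϑ : Matrix (Fin d) (Fin d) ℝ)
    (f : (Fin d → ℝ) → ℂ) (ξ : Fin d → ℝ) : ℂ :=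
  ∫ x : Fin d → ℝ, f x * Complex.exp (-2 * Complex.I * ((x ⬝ᵥ ϑ⁻¹.mulVec ξ : ℝ) : ℂ))

namespace MoyalAux

open Polynomial Filter

variable {d : ℕ}

lemma charpoly_eval (M : Matrix (Fin d) (Fin d) ℝ) (r : ℝ) :
    M.charpoly.eval r = (Matrix.diagonal (fun _ => r) - M).det := by
  rw [Matrix.charpoly, ← Polynomial.coe_evalRingHom, RingHom.map_det]
  congr 1
  ext i j
  by_cases h : i = j
  · subst h; simp [Matrix.charmatrix_apply_eq]
  · simp [Matrix.charmatrix_apply_ne _ _ _ h, Matrix.diagonal_apply_ne _ h]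

lemma det_pos_of_skew (hd : 1 ≤ d) (ϑ : Matrix (Fin d) (Fin d) ℝ)
    (hϑ : ϑᵀ = -ϑ) (hϑinv : IsUnit ϑ.det) : 0 < ϑ.det := by
  have hdet : ϑ.det ≠ 0 := hϑinv.ne_zero
  have h1 : ϑ.det = (-1 : ℝ) ^ d * ϑ.det := by
    conv_lhs => rw [← Matrix.det_transpose, hϑ, Matrix.det_neg]
    simp
  have heven : Even d := by
    by_contra hodd
    rw [(Nat.not_even_iff_odd.mp hodd).neg_one_pow] at h1
    exact hdet (by linarith)
  have hroot : ∀ r : ℝ, ϑ.charpoly.eval r ≠ 0 := by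
    intro r hr
    rw [charpoly_eval] at hr
    obtain ⟨v, hv, hveq⟩ := (Matrix.exists_mulVec_eq_zero_iff).mpr hr
    have heig : ϑ.mulVec v = r • v := by
      have h2 : (Matrix.diagonal fun _ => r) *ᵥ v - ϑ *ᵥ v = 0 := by
        rw [← Matrix.sub_mulVec]; exact hveq
      have h3 : (Matrix.diagonal fun _ => r) *ᵥ v = r • v :=
        funext fun i => by simp [Matrix.mulVec_diagonal]
      rw [h3] at h2
      exact (sub_eq_zero.mp h2).symm
    have hs : v ⬝ᵥ ϑ.mulVec v = -(v ⬝ᵥ ϑ.mulVec v) := by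
      conv_lhs => rw [Matrix.dotProduct_mulVec, ← Matrix.mulVec_transpose, hϑ,
        Matrix.neg_mulVec, neg_dotProduct, dotProduct_comm]
    have hs0 : v ⬝ᵥ ϑ.mulVec v = 0 := by linarith
    rw [heig, dotProduct_smul, smul_eq_mul] at hs0
    have hvv : v ⬝ᵥ v ≠ 0 := fun h => hv (dotProduct_self_eq_zero.mp h)
    have hr0 : r = 0 := by
      rcases mul_eq_zero.mp hs0 with h | h
      · exact h
      · exact absurd h hvv
    subst hr0
    rw [zero_smul] at heig
    exact hdet (Matrix.exists_mulVec_eq_zero_iff.mp ⟨v, hv, heig⟩)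
  have hmonic := ϑ.charpoly_monic
  have hdeg : 0 < ϑ.charpoly.degree := by
    rw [Polynomial.degree_eq_natDegree hmonic.ne_zero, Matrix.charpoly_natDegree_eq_dim]
    simp only [Fintype.card_fin]
    exact_mod_cast hd
  have htend : Tendsto (fun x => ϑ.charpoly.eval x) atTop atTop :=
    Polynomial.tendsto_atTop_of_leadingCoeff_nonneg _ hdeg (by rw [hmonic.leadingCoeff]; norm_num)
  have heval0 : 0 < ϑ.charpoly.eval 0 := by
    rcases lt_trichotomy (ϑ.charpoly.eval 0) 0 with h | h | h
    · obtain ⟨x₀, hx₀⟩ := ((htend.eventually_ge_atTop 1).and (eventually_ge_atTop (0:ℝ))).exists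
      obtain ⟨r, -, hr⟩ := intermediate_value_Icc hx₀.2
        ((ϑ.charpoly.continuous).continuousOn (s := Set.Icc 0 x₀))
        (Set.mem_Icc.mpr ⟨le_of_lt h, by linarith [hx₀.1]⟩)
      exact absurd hr (hroot r)
    · exact absurd h (hroot 0)
    · exact h
  have : ϑ.det = ϑ.charpoly.eval 0 := by
    rw [← Polynomial.coeff_zero_eq_eval_zero, Matrix.det_eq_sign_charpoly_coeff]
    simp [Fintype.card_fin, heven.neg_one_pow]
  rw [this]; exact heval0

lemma map_affine (M : Matrix (Fin d) (Fin d) ℝ) (hM : M.det ≠ 0) (c : Fin d → ℝ) :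
    Measure.map (fun t => c + M.mulVec t) (volume : Measure (Fin d → ℝ)) =
      ENNReal.ofReal |M.det|⁻¹ • volume := by
  have hdet : LinearMap.det (Matrix.toLin' M) ≠ 0 := by
    rwa [LinearMap.det_toLin']
  have hlin : Measure.map (fun t : Fin d → ℝ => M.mulVec t) volume =
      ENNReal.ofReal |M.det|⁻¹ • volume := by
    have := Measure.map_linearMap_addHaar_eq_smul_addHaar (μ := volume) hdet
    rw [LinearMap.det_toLin'] at this
    simpa [abs_inv, Matrix.toLin'_apply, show ⇑(Matrix.toLin' M) = fun t => M *ᵥ t from funext (Matrix.toLin'_apply M)] using this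
  have hmeas : Measurable (fun t : Fin d → ℝ => M.mulVec t) :=
    (Matrix.toLin' M).continuous_of_finiteDimensional.measurable
  rw [show (fun t : Fin d → ℝ => c + M.mulVec t) = (fun u => c + u) ∘ (fun t => M.mulVec t) from rfl,
    ← Measure.map_map (measurable_const_add c) hmeas, hlin, Measure.map_smul,
    MeasureTheory.map_add_left_eq_self volume c]

lemma integral_comp_affine (M : Matrix (Fin d) (Fin d) ℝ) (hM : M.det ≠ 0) (c : Fin d → ℝ)
    {g : (Fin d → ℝ) → ℂ} (hg : Continuous g) :
    ∫ t : Fin d → ℝ, g (c + M.mulVec t) = Complex.ofReal |M.det|⁻¹ * ∫ u, g u := by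
  have hmeas : AEMeasurable (fun t : Fin d → ℝ => c + M.mulVec t) volume :=
    (continuous_const.add (Matrix.toLin' M).continuous_of_finiteDimensional).measurable.aemeasurable
  rw [show (∫ t : Fin d → ℝ, g (c + M.mulVec t)) =
      ∫ u, g u ∂(Measure.map (fun t => c + M.mulVec t) volume)
      from (integral_map hmeas hg.aestronglyMeasurable).symm,
    map_affine M hM c, integral_smul_measure]
  rw [ENNReal.toReal_ofReal (by positivity)]
  simp [Complex.real_smul]

lemma integrable_comp_affine (M : Matrix (Fin d) (Fin d) ℝ) (hM : M.det ≠ 0) (c : Fin d → ℝ)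
    {g : (Fin d → ℝ) → ℂ} (hg : Continuous g) (hgi : Integrable g (volume : Measure (Fin d → ℝ))) :
    Integrable (fun t : Fin d → ℝ => g (c + M.mulVec t)) volume := by
  have hmeas : AEMeasurable (fun t : Fin d → ℝ => c + M.mulVec t) volume :=
    (continuous_const.add (Matrix.toLin' M).continuous_of_finiteDimensional).measurable.aemeasurable
  have h1 : Integrable g (Measure.map (fun t : Fin d → ℝ => c + M.mulVec t) volume) := by
    rw [map_affine M hM c]
    exact hgi.smul_measure ENNReal.ofReal_ne_top
  exact (integrable_map_measure hg.aestronglyMeasurable hmeas).mp h1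

lemma cont_dotr (w : Fin d → ℝ) : Continuous fun u : Fin d → ℝ => u ⬝ᵥ w := by
  classical
  simpa [dotProduct] using
    continuous_finset_sum Finset.univ fun i (_ : i ∈ Finset.univ) =>
      ((continuous_apply i).mul (continuous_const : Continuous fun _ : Fin d → ℝ => w i))

lemma norm_exp_I_mul (r : ℝ) : ‖Complex.exp (Complex.I * (r : ℂ))‖ = 1 := by
  simp [Complex.norm_exp]

end MoyalAux

theorem moyal_as_twisted_convolution_right
    (d : ℕ) (hd : 1 ≤ d) (ϑ : Matrix (Fin d) (Fin d) ℝ) (hϑ : ϑᵀ = -ϑ)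
    (hϑinv : IsUnit ϑ.det)
    (f₁ f₂ : SchwartzMap (Fin d → ℝ) ℂ) (x : Fin d → ℝ) :
    moyal d ϑ ⇑f₁ ⇑f₂ x =
      (((Real.pi ^ d * ϑ.det : ℝ)) : ℂ)⁻¹ *
        ∫ t : Fin d → ℝ, f₁ t * symplFTBar d ϑ (⇑f₂) (x - t) *
          Complex.exp (-2 * Complex.I * ((x ⬝ᵥ ϑ⁻¹.mulVec t : ℝ) : ℂ)) ∧
    moyal d ϑ ⇑f₁ ⇑f₂ x =
      (((Real.pi ^ d * ϑ.det : ℝ)) : ℂ)⁻¹ *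
        twConv d (-(4 : ℝ) • ϑ⁻¹) (⇑f₁) (symplFTBar d ϑ ⇑f₂) x := by
  classical
  have hdetpos : 0 < ϑ.det := MoyalAux.det_pos_of_skew hd ϑ hϑ hϑinv
  have hdetne : ϑ.det ≠ 0 := ne_of_gt hdetpos
  set M : Matrix (Fin d) (Fin d) ℝ := (1/2 : ℝ) • ϑ with hMdef
  have hMdet : M.det = (1/2 : ℝ)^d * ϑ.det := by
    rw [hMdef, Matrix.det_smul]; simp
  have hMpos : 0 < M.det := by rw [hMdet]; positivity
  have hMne : M.det ≠ 0 := ne_of_gt hMpos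
  have hinvT : ϑ⁻¹ᵀ = -ϑ⁻¹ := by
    rw [Matrix.transpose_nonsing_inv, hϑ]
    exact Matrix.inv_eq_right_inv
      (by rw [Matrix.neg_mul, Matrix.mul_neg, neg_neg, Matrix.mul_nonsing_inv ϑ hϑinv])
  have hϑϑ : ∀ v : Fin d → ℝ, ϑ⁻¹ *ᵥ (ϑ *ᵥ v) = v := by
    intro v; rw [Matrix.mulVec_mulVec, Matrix.nonsing_inv_mul ϑ hϑinv, Matrix.one_mulVec]
  have key1 : ∀ t z : Fin d → ℝ, (ϑ *ᵥ t) ⬝ᵥ (ϑ⁻¹ *ᵥ z) = -(t ⬝ᵥ z) := by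
    intro t z
    rw [Matrix.dotProduct_mulVec, ← Matrix.mulVec_transpose, hinvT, Matrix.neg_mulVec, hϑϑ,
      neg_dotProduct]
  have hx0 : ∀ v : Fin d → ℝ, v ⬝ᵥ ϑ⁻¹ *ᵥ v = 0 := by
    intro v
    have hs : v ⬝ᵥ ϑ⁻¹ *ᵥ v = -(v ⬝ᵥ ϑ⁻¹ *ᵥ v) := by
      conv_lhs => rw [Matrix.dotProduct_mulVec, ← Matrix.mulVec_transpose, hinvT,
        Matrix.neg_mulVec, neg_dotProduct, dotProduct_comm]
    linarith
  set F : (Fin d → ℝ) → (Fin d → ℝ) → ℂ := fun t y =>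
    f₁ y * (f₂ (x + M *ᵥ t) * Complex.exp (Complex.I * ((t ⬝ᵥ (x - y) : ℝ) : ℂ))) with hF
  have hMcont : Continuous fun t : Fin d → ℝ => M *ᵥ t := by
    have h := (Matrix.toLin' M).continuous_of_finiteDimensional
    have he : (fun t : Fin d → ℝ => M *ᵥ t) = ⇑(Matrix.toLin' M) := by
      ext t i; simp [Matrix.toLin'_apply]
    rw [he]; exact h
  have hdotc : Continuous fun p : (Fin d → ℝ) × (Fin d → ℝ) => p.1 ⬝ᵥ (x - p.2) := by
    simp only [dotProduct, Pi.sub_apply]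
    exact continuous_finset_sum Finset.univ fun i _ =>
      ((continuous_apply i).comp continuous_fst).mul
        (continuous_const.sub ((continuous_apply i).comp continuous_snd))
  have hFcont : Continuous fun p : (Fin d → ℝ) × (Fin d → ℝ) => F p.1 p.2 := by
    refine ((f₁.continuous.comp continuous_snd).mul ?_)
    refine (f₂.continuous.comp (continuous_const.add (hMcont.comp continuous_fst))).mul ?_
    exact Complex.continuous_exp.comp (continuous_const.mul (Complex.continuous_ofReal.comp hdotc))
  have hf2comp : Integrable (fun t : Fin d → ℝ => f₂ (x + M *ᵥ t)) volume :=
    MoyalAux.integrable_comp_affine M hMne x f₂.continuous f₂.integrable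
  have hintF : Integrable (Function.uncurry F) (volume.prod volume) := by
    refine Integrable.mono' (g := fun p => ‖f₂ (x + M *ᵥ p.1)‖ * ‖f₁ p.2‖)
      (hf2comp.norm.mul_prod f₁.integrable.norm) hFcont.aestronglyMeasurable
      (Filter.Eventually.of_forall fun p => ?_)
    simp only [Function.uncurry, hF, norm_mul, MoyalAux.norm_exp_I_mul, mul_one]
    exact le_of_eq (mul_comm _ _)
  have h1 : ∀ t : Fin d → ℝ,
      fourierT d ⇑f₁ t * f₂ (x + (1/2 : ℝ) • ϑ.mulVec t) *
          Complex.exp (Complex.I * ((t ⬝ᵥ x : ℝ) : ℂ))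
        = ∫ y, F t y := by
    intro t
    have harg : x + (1/2 : ℝ) • ϑ.mulVec t = x + M *ᵥ t := by
      rw [hMdef, Matrix.smul_mulVec]
    rw [harg, fourierT, mul_assoc, ← MeasureTheory.integral_mul_const]
    refine integral_congr_ae (Filter.Eventually.of_forall fun y => ?_)
    simp only [hF]
    have hdot : ((t ⬝ᵥ (x - y) : ℝ) : ℂ) = ((t ⬝ᵥ x : ℝ) : ℂ) - ((y ⬝ᵥ t : ℝ) : ℂ) := by
      rw [dotProduct_sub, dotProduct_comm t y]; push_cast; ring
    rw [hdot, show Complex.I * (((t ⬝ᵥ x : ℝ) : ℂ) - ((y ⬝ᵥ t : ℝ) : ℂ))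
        = (-Complex.I * ((y ⬝ᵥ t : ℝ) : ℂ)) + Complex.I * ((t ⬝ᵥ x : ℝ) : ℂ) by ring,
      Complex.exp_add]
    ring
  have h2 : (∫ t : Fin d → ℝ, fourierT d ⇑f₁ t * f₂ (x + (1/2 : ℝ) • ϑ.mulVec t) *
      Complex.exp (Complex.I * ((t ⬝ᵥ x : ℝ) : ℂ))) = ∫ y, ∫ t, F t y :=
    calc (∫ t : Fin d → ℝ, fourierT d ⇑f₁ t * f₂ (x + (1/2 : ℝ) • ϑ.mulVec t) *
        Complex.exp (Complex.I * ((t ⬝ᵥ x : ℝ) : ℂ)))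
        = ∫ t, ∫ y, F t y := integral_congr_ae (Filter.Eventually.of_forall h1)
      _ = ∫ y, ∫ t, F t y := integral_integral_swap hintF
  have h3 : ∀ y : Fin d → ℝ, (∫ t, F t y)
      = f₁ y * (((((1/2 : ℝ)^d * ϑ.det)⁻¹ : ℝ) : ℂ) *
          (symplFTBar d ϑ ⇑f₂ (x - y) *
            Complex.exp (-2 * Complex.I * ((x ⬝ᵥ ϑ⁻¹.mulVec y : ℝ) : ℂ)))) := by
    intro y
    simp only [hF]
    rw [MeasureTheory.integral_const_mul]
    congr 1
    set G : (Fin d → ℝ) → ℂ := fun u =>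
      f₂ u * Complex.exp (-2 * Complex.I * (((u - x) ⬝ᵥ ϑ⁻¹.mulVec (x - y) : ℝ) : ℂ)) with hG
    have hGcont : Continuous G := by
      refine f₂.continuous.mul (Complex.continuous_exp.comp ?_)
      exact continuous_const.mul (Complex.continuous_ofReal.comp
        ((MoyalAux.cont_dotr _).comp (continuous_id.sub continuous_const)))
    have hGA : ∀ t, f₂ (x + M *ᵥ t) * Complex.exp (Complex.I * ((t ⬝ᵥ (x - y) : ℝ) : ℂ))
        = G (x + M *ᵥ t) := by
      intro t
      simp only [hG]
      have harg2 : x + M *ᵥ t - x = M *ᵥ t := by abel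
      rw [harg2]
      have hre : (M *ᵥ t) ⬝ᵥ ϑ⁻¹.mulVec (x - y) = -(1/2) * (t ⬝ᵥ (x - y)) := by
        rw [hMdef, Matrix.smul_mulVec, smul_dotProduct, key1]
        simp [smul_eq_mul]; ring
      have hexp : (-2 : ℂ) * Complex.I * ((-(1/2) * (t ⬝ᵥ (x - y)) : ℝ) : ℂ)
          = Complex.I * ((t ⬝ᵥ (x - y) : ℝ) : ℂ) := by push_cast; ring
      rw [hre, hexp]
    rw [integral_congr_ae (Filter.Eventually.of_forall hGA),
      MoyalAux.integral_comp_affine M hMne x hGcont]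
    have habs : |M.det|⁻¹ = ((1/2 : ℝ)^d * ϑ.det)⁻¹ := by
      rw [hMdet, abs_of_pos (by positivity)]
    have hxw : x ⬝ᵥ ϑ⁻¹.mulVec (x - y) = -(x ⬝ᵥ ϑ⁻¹.mulVec y) := by
      rw [Matrix.mulVec_sub, dotProduct_sub, hx0]
      ring
    have hGsplit : ∀ u, G u
        = (f₂ u * Complex.exp (-2 * Complex.I * ((u ⬝ᵥ ϑ⁻¹.mulVec (x - y) : ℝ) : ℂ))) *
            Complex.exp (-2 * Complex.I * ((x ⬝ᵥ ϑ⁻¹.mulVec y : ℝ) : ℂ)) := by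
      intro u
      simp only [hG]
      have hsplitRe : ((u - x) ⬝ᵥ ϑ⁻¹.mulVec (x - y) : ℝ)
          = (u ⬝ᵥ ϑ⁻¹.mulVec (x - y)) + (x ⬝ᵥ ϑ⁻¹.mulVec y) := by
        rw [sub_dotProduct, hxw]; ring
      have he : (-2 : ℂ) * Complex.I * (((u - x) ⬝ᵥ ϑ⁻¹.mulVec (x - y) : ℝ) : ℂ)
          = (-2 * Complex.I * ((u ⬝ᵥ ϑ⁻¹.mulVec (x - y) : ℝ) : ℂ))
            + (-2 * Complex.I * ((x ⬝ᵥ ϑ⁻¹.mulVec y : ℝ) : ℂ)) := by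
        rw [hsplitRe]; push_cast; ring
      rw [he, Complex.exp_add, ← mul_assoc]
    rw [integral_congr_ae (Filter.Eventually.of_forall hGsplit),
      MeasureTheory.integral_mul_const, habs, symplFTBar]
  have main : moyal d ϑ ⇑f₁ ⇑f₂ x =
      (((Real.pi ^ d * ϑ.det : ℝ)) : ℂ)⁻¹ *
        ∫ t : Fin d → ℝ, f₁ t * symplFTBar d ϑ (⇑f₂) (x - t) *
          Complex.exp (-2 * Complex.I * ((x ⬝ᵥ ϑ⁻¹.mulVec t : ℝ) : ℂ)) := by
    simp only [moyal]
    rw [h2]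
    have h4 : (∫ y : Fin d → ℝ, ∫ t : Fin d → ℝ, F t y)
        = ((((1/2 : ℝ)^d * ϑ.det)⁻¹ : ℝ) : ℂ) *
          ∫ y : Fin d → ℝ, f₁ y * symplFTBar d ϑ (⇑f₂) (x - y) *
            Complex.exp (-2 * Complex.I * ((x ⬝ᵥ ϑ⁻¹.mulVec y : ℝ) : ℂ)) := by
      rw [← MeasureTheory.integral_const_mul]
      refine integral_congr_ae (Filter.Eventually.of_forall fun y => ?_)
      dsimp only
      rw [h3 y]; ring
    rw [h4, ← mul_assoc]
    congr 1
    have hc : (((2 * Real.pi) ^ d : ℝ))⁻¹ * (((1/2 : ℝ)^d * ϑ.det))⁻¹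
        = (Real.pi ^ d * ϑ.det)⁻¹ := by
      have hπ : Real.pi ≠ 0 := Real.pi_ne_zero
      field_simp
      rw [← mul_pow, mul_comm 2 Real.pi, mul_assoc]; norm_num
    exact_mod_cast hc
  refine ⟨main, ?_⟩
  rw [main, twConv]
  congr 1
  refine integral_congr_ae (Filter.Eventually.of_forall fun t => ?_)
  have hvec : x ⬝ᵥ ((-(4:ℝ)) • ϑ⁻¹) *ᵥ t = -4 * (x ⬝ᵥ ϑ⁻¹.mulVec t) := by
    rw [Matrix.smul_mulVec, dotProduct_smul]; simp [smul_eq_mul]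
  have hexp2 : Complex.I / 2 * ((-4 * (x ⬝ᵥ ϑ⁻¹.mulVec t) : ℝ) : ℂ)
      = -2 * Complex.I * ((x ⬝ᵥ ϑ⁻¹.mulVec t : ℝ) : ℂ) := by push_cast; ring
  simp only [hvec, hexp2]
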